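/- Fix exponents $\{\alpha^{(j)}\}_{j=1}^\ell \subset \R^n$. The set $\mathcal{C}_{AGE}(\alpha^{(1)},\dots,\alpha^{(\ell)};\alpha^{(0)}) = \{(\bc,\beta) \in \R^\ell_+ \times \R : \exists \nu \in \R^\ell_+ \text{ s.t. } D(\nu,e\bc) \le \beta,\; \sum_j \alpha^{(j)}\nu_j = (\mathbf{1}'\nu)\alpha^{(0)}\}$ is a convex cone. -/

import Mathlib

open Finset

noncomputable def relEnt {ℓ : ℕ} (ν lam : Fin ℓ → ℝ) : EReal :=
  ∑ j, if ν j = 0 then (0 : EReal) else if lam j = 0 then (⊤ : EReal)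
    else ((ν j * Real.log (ν j / lam j) : ℝ) : EReal)


lemma coe_sum' {ι : Type*} (s : Finset ι) (f : ι → ℝ) :
    ((∑ i ∈ s, f i : ℝ) : EReal) = ∑ i ∈ s, (f i : EReal) :=
  map_sum (⟨⟨Real.toEReal, EReal.coe_zero⟩, EReal.coe_add⟩ : ℝ →+ EReal) f s

/-- Real version of one term of relative entropy. -/
noncomputable def rterm (a c : ℝ) : ℝ := if a = 0 then 0 else a * Real.log (a / c)

/-- If no term is ⊤, relEnt equals the coercion of the real sum. -/
lemma relEnt_eq_coe {ℓ : ℕ} (ν lam : Fin ℓ → ℝ) (h : ∀ j, ν j ≠ 0 → lam j ≠ 0) :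
    relEnt ν lam = ((∑ j, rterm (ν j) (lam j) : ℝ) : EReal) := by
  rw [relEnt, coe_sum']
  refine Finset.sum_congr rfl fun j _ => ?_
  by_cases hν : ν j = 0
  · simp [rterm, hν]
  · simp [rterm, hν, h j hν]

/-- If relEnt is ≤ a real number, then no ⊤ terms occur. -/
lemma relEnt_finite {ℓ : ℕ} (ν lam : Fin ℓ → ℝ) (β : ℝ)
    (h : relEnt ν lam ≤ (β : EReal)) : ∀ j, ν j ≠ 0 → lam j ≠ 0 := by
  intro j hν hl
  have hterm : ∀ k, ((min 0 (ν k * Real.log (ν k / lam k)) : ℝ) : EReal) ≤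
      (if ν k = 0 then (0 : EReal) else if lam k = 0 then (⊤ : EReal)
        else ((ν k * Real.log (ν k / lam k) : ℝ) : EReal)) := by
    intro k
    by_cases h1 : ν k = 0
    · simp [h1]
    · by_cases h2 : lam k = 0
      · simp only [h1, h2, if_neg, if_pos, ite_false, ite_true]
        exact le_top
      · simp only [h1, h2, ite_false]
        exact_mod_cast min_le_right _ _
  have hsplit : relEnt ν lam = (if ν j = 0 then (0 : EReal) else if lam j = 0 then (⊤ : EReal)
        else ((ν j * Real.log (ν j / lam j) : ℝ) : EReal)) +
      ∑ k ∈ Finset.univ.erase j, (if ν k = 0 then (0 : EReal) else if lam k = 0 then (⊤ : EReal)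
        else ((ν k * Real.log (ν k / lam k) : ℝ) : EReal)) := by
    rw [relEnt, ← Finset.add_sum_erase _ _ (Finset.mem_univ j)]
  have hrest : ((∑ k ∈ Finset.univ.erase j, min 0 (ν k * Real.log (ν k / lam k)) : ℝ) : EReal) ≤
      ∑ k ∈ Finset.univ.erase j, (if ν k = 0 then (0 : EReal) else if lam k = 0 then (⊤ : EReal)
        else ((ν k * Real.log (ν k / lam k) : ℝ) : EReal)) := by
    rw [coe_sum']
    exact Finset.sum_le_sum fun k _ => hterm k
  have hne : (∑ k ∈ Finset.univ.erase j, (if ν k = 0 then (0 : EReal) else if lam k = 0 then (⊤ : EReal)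
        else ((ν k * Real.log (ν k / lam k) : ℝ) : EReal))) ≠ ⊥ := by
    intro hbot
    rw [hbot] at hrest
    exact (EReal.coe_ne_bot _) (le_bot_iff.mp hrest)
  rw [hsplit, if_neg hν, if_pos hl, EReal.top_add_of_ne_bot hne] at h
  exact absurd h (not_le.mpr (EReal.coe_lt_top β))

lemma rterm_add_le (a b c d : ℝ) (ha : 0 ≤ a) (hb : 0 ≤ b) (hc : 0 ≤ c) (hd : 0 ≤ d)
    (hac : a ≠ 0 → c ≠ 0) (hbd : b ≠ 0 → d ≠ 0) :
    rterm (a + b) (c + d) ≤ rterm a c + rterm b d := by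
  by_cases h1 : a = 0
  · by_cases h2 : b = 0
    · simp [rterm, h1, h2]
    · have hd' : 0 < d := (hd.lt_of_ne (fun h => hbd h2 h.symm))
      have hb' : 0 < b := hb.lt_of_ne (Ne.symm h2)
      simp only [rterm, h1, h2, zero_add, if_neg h2, if_pos rfl, if_true, if_false,
        eq_self_iff_true, zero_add]
      have hlog : Real.log (b / (c + d)) ≤ Real.log (b / d) := by
        apply Real.log_le_log (by positivity)
        gcongr
        linarith
      exact mul_le_mul_of_nonneg_left hlog hb
  · by_cases h2 : b = 0
    · have hc' : 0 < c := (hc.lt_of_ne (fun h => hac h1 h.symm))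
      have ha' : 0 < a := ha.lt_of_ne (Ne.symm h1)
      simp only [rterm, h1, h2, add_zero, if_neg h1, if_pos rfl, if_true, if_false]
      have hlog : Real.log (a / (c + d)) ≤ Real.log (a / c) := by
        apply Real.log_le_log (by positivity)
        gcongr
        linarith
      exact mul_le_mul_of_nonneg_left hlog ha
    · have hc' : 0 < c := (hc.lt_of_ne (fun h => hac h1 h.symm))
      have hd' : 0 < d := (hd.lt_of_ne (fun h => hbd h2 h.symm))
      have ha' : 0 < a := ha.lt_of_ne (Ne.symm h1)
      have hb' : 0 < b := hb.lt_of_ne (Ne.symm h2)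
      have hs : (0:ℝ) < c + d := by linarith
      have hab : a + b ≠ 0 := by positivity
      simp only [rterm, if_neg h1, if_neg h2, if_neg hab]
      have key := Real.convexOn_mul_log.2
        (show a / c ∈ Set.Ici (0:ℝ) from Set.mem_Ici.mpr (by positivity))
        (show b / d ∈ Set.Ici (0:ℝ) from Set.mem_Ici.mpr (by positivity))
        (show (0:ℝ) ≤ c / (c + d) by positivity)
        (show (0:ℝ) ≤ d / (c + d) by positivity)
        (show c / (c + d) + d / (c + d) = 1 by field_simp)
      simp only [smul_eq_mul] at key
      have e1 : c / (c + d) * (a / c) + d / (c + d) * (b / d) = (a + b) / (c + d) := by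
        field_simp
      rw [e1] at key
      have e2 : c / (c + d) * (a / c * Real.log (a / c)) = a / (c + d) * Real.log (a / c) := by
        field_simp
      have e3 : d / (c + d) * (b / d * Real.log (b / d)) = b / (c + d) * Real.log (b / d) := by
        field_simp
      rw [e2, e3] at key
      have := mul_le_mul_of_nonneg_left key hs.le
      calc (a + b) * Real.log ((a + b) / (c + d))
          = (c + d) * ((a + b) / (c + d) * Real.log ((a + b) / (c + d))) := by
            field_simp
        _ ≤ (c + d) * (a / (c + d) * Real.log (a / c) + b / (c + d) * Real.log (b / d)) := this
        _ = a * Real.log (a / c) + b * Real.log (b / d) := by field_simp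

lemma rterm_smul (t a c : ℝ) (ht : t ≠ 0) : rterm (t * a) (t * c) = t * rterm a c := by
  unfold rterm
  by_cases h : a = 0
  · simp [h]
  · rw [if_neg (by exact mul_ne_zero ht h), if_neg h, mul_div_mul_left _ _ ht]
    ring

/-- The cone of coefficients of AM/GM-exponentials with exponents
`α^{(1)},…,α^{(ℓ)}` and (possibly negative) coefficient `β` on exponent `α^{(0)}`. -/
def CAGE {n ℓ : ℕ} (α : Fin ℓ → Fin n → ℝ) (α0 : Fin n → ℝ) :
    Set ((Fin ℓ → ℝ) × ℝ) :=
  {p | (∀ j, 0 ≤ p.1 j) ∧ ∃ ν : Fin ℓ → ℝ, (∀ j, 0 ≤ ν j) ∧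
    relEnt ν (fun j => Real.exp 1 * p.1 j) ≤ (p.2 : EReal) ∧
    ∑ j, ν j • α j = (∑ j, ν j) • α0}

lemma CAGE_add {n ℓ : ℕ} (α : Fin ℓ → Fin n → ℝ) (α0 : Fin n → ℝ) :
    ∀ p ∈ CAGE α α0, ∀ q ∈ CAGE α α0, p + q ∈ CAGE α α0 := by
  rintro p ⟨hp1, ν, hν, hνe, hνl⟩ q ⟨hq1, μ, hμ, hμe, hμl⟩
  have he : (0:ℝ) < Real.exp 1 := Real.exp_pos 1
  have hfp : ∀ j, ν j ≠ 0 → Real.exp 1 * p.1 j ≠ 0 := relEnt_finite _ _ _ hνe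
  have hfq : ∀ j, μ j ≠ 0 → Real.exp 1 * q.1 j ≠ 0 := relEnt_finite _ _ _ hμe
  refine ⟨fun j => add_nonneg (hp1 j) (hq1 j), ν + μ, fun j => add_nonneg (hν j) (hμ j), ?_, ?_⟩
  · have hcond : ∀ j, (ν + μ) j ≠ 0 → Real.exp 1 * (p + q).1 j ≠ 0 := by
      intro j hj
      have : ν j ≠ 0 ∨ μ j ≠ 0 := by
        by_contra h
        push_neg at h
        exact hj (by simp [Pi.add_apply, h.1, h.2])
      have hpos : 0 < p.1 j + q.1 j := by
        rcases this with h | h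
        · have := hfp j h
          have : p.1 j ≠ 0 := fun h0 => this (by rw [h0, mul_zero])
          have := (hp1 j).lt_of_ne (Ne.symm this)
          linarith [hq1 j]
        · have := hfq j h
          have : q.1 j ≠ 0 := fun h0 => this (by rw [h0, mul_zero])
          have := (hq1 j).lt_of_ne (Ne.symm this)
          linarith [hp1 j]
      simp only [Prod.fst_add, Pi.add_apply]
      positivity
    rw [relEnt_eq_coe _ _ hcond]
    rw [relEnt_eq_coe _ _ hfp] at hνe
    rw [relEnt_eq_coe _ _ hfq] at hμe
    rw [EReal.coe_le_coe_iff] at hνe hμe ⊢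
    calc ∑ j, rterm ((ν + μ) j) (Real.exp 1 * (p + q).1 j)
        ≤ ∑ j, (rterm (ν j) (Real.exp 1 * p.1 j) + rterm (μ j) (Real.exp 1 * q.1 j)) := by
          refine Finset.sum_le_sum fun j _ => ?_
          have : Real.exp 1 * (p + q).1 j = Real.exp 1 * p.1 j + Real.exp 1 * q.1 j := by
            simp [Prod.fst_add, Pi.add_apply]; ring
          rw [Pi.add_apply, this]
          exact rterm_add_le _ _ _ _ (hν j) (hμ j) (mul_nonneg he.le (hp1 j)) (mul_nonneg he.le (hq1 j))
            (hfp j) (hfq j)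
      _ = (∑ j, rterm (ν j) (Real.exp 1 * p.1 j)) + ∑ j, rterm (μ j) (Real.exp 1 * q.1 j) :=
          Finset.sum_add_distrib
      _ ≤ p.2 + q.2 := add_le_add hνe hμe
      _ = (p + q).2 := rfl
  · simp only [Pi.add_apply, add_smul, Finset.sum_add_distrib, hνl, hμl]

lemma CAGE_smul {n ℓ : ℕ} (α : Fin ℓ → Fin n → ℝ) (α0 : Fin n → ℝ) :
    ∀ t : ℝ, 0 ≤ t → ∀ p ∈ CAGE α α0, t • p ∈ CAGE α α0 := by
  rintro t ht p ⟨hp1, ν, hν, hνe, hνl⟩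
  rcases eq_or_lt_of_le ht with rfl | ht'
  · refine ⟨fun j => by simp, 0, fun j => le_refl 0, ?_, by simp⟩
    have : relEnt (0 : Fin ℓ → ℝ) (fun j => Real.exp 1 * ((0:ℝ) • p).1 j) = 0 := by
      simp [relEnt]
    rw [this]
    simp
  · have htne : t ≠ 0 := ht'.ne'
    have hfp : ∀ j, ν j ≠ 0 → Real.exp 1 * p.1 j ≠ 0 := relEnt_finite _ _ _ hνe
    refine ⟨fun j => by simpa using mul_nonneg ht (hp1 j), t • ν,
      fun j => by simpa using mul_nonneg ht (hν j), ?_, ?_⟩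
    · have hcond : ∀ j, (t • ν) j ≠ 0 → Real.exp 1 * (t • p).1 j ≠ 0 := by
        intro j hj
        have hνj : ν j ≠ 0 := fun h => hj (by simp [h])
        have := hfp j hνj
        simp only [Prod.smul_fst, Pi.smul_apply, smul_eq_mul]
        intro h0
        rcases mul_eq_zero.mp h0 with h | h
        · exact (Real.exp_pos 1).ne' h
        · rcases mul_eq_zero.mp h with h | h
          · exact htne h
          · exact this (by rw [h, mul_zero])
      rw [relEnt_eq_coe _ _ hcond]
      rw [relEnt_eq_coe _ _ hfp] at hνe
      rw [EReal.coe_le_coe_iff] at hνe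
      have : ((t • p).2 : EReal) = ((t * p.2 : ℝ) : EReal) := by norm_num
      rw [this, EReal.coe_le_coe_iff]
      calc ∑ j, rterm ((t • ν) j) (Real.exp 1 * (t • p).1 j)
          = ∑ j, t * rterm (ν j) (Real.exp 1 * p.1 j) := by
            refine Finset.sum_congr rfl fun j _ => ?_
            have : Real.exp 1 * (t • p).1 j = t * (Real.exp 1 * p.1 j) := by
              simp [Prod.smul_fst, Pi.smul_apply]; ring
            rw [Pi.smul_apply, smul_eq_mul, this]
            exact rterm_smul t _ _ htne
        _ = t * ∑ j, rterm (ν j) (Real.exp 1 * p.1 j) := by rw [Finset.mul_sum]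
        _ ≤ t * p.2 := mul_le_mul_of_nonneg_left hνe ht
    · simp only [Pi.smul_apply, smul_eq_mul, mul_smul, ← Finset.smul_sum, hνl]
      rw [← Finset.mul_sum, mul_smul]


theorem stmt5 {n ℓ : ℕ} (α : Fin ℓ → Fin n → ℝ) (α0 : Fin n → ℝ) :
    (∀ p ∈ CAGE α α0, ∀ q ∈ CAGE α α0, p + q ∈ CAGE α α0) ∧
    (∀ t : ℝ, 0 ≤ t → ∀ p ∈ CAGE α α0, t • p ∈ CAGE α α0) ∧
    Convex ℝ (CAGE α α0) := by
  refine ⟨CAGE_add α α0, CAGE_smul α α0, ?_⟩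
  intro p hp q hq a b ha hb hab
  exact CAGE_add α α0 _ (CAGE_smul α α0 a ha p hp) _ (CAGE_smul α α0 b hb q hq)
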